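/- arXiv:2006.09943 — 2 statements merged into one kernel-verified Lean document; each statement's English description precedes it below -/
import Mathlib

section
/- Let L = ℤ^d, G a group, and α : L → G ≀ Sym(A) a group homomorphism, where A = L/L₁ for a finite-index subgroup L₁ ≤ L and the composite π∘α : L → Sym(A) is the map induced by the Cayley embedding of A. Let X be a G-set, let X^A carry the induced G ≀ Sym(A)-action, and let ρ_e : L → G be the map of sets given by projection onto the coordinate of the identity e ∈ A. Then ρ_e restricted to L₁ is a group homomorphism, and the evaluation map at e gives a bijection from the fixed points (X^A)^{im α} to the fixed points X^{im(ρ_e|_{L₁})}. -/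
/-- Coordinate permutation as a multiplicative automorphism of `A → G`:
`(e • f) a = f (e⁻¹ a)`. -/
def permCongrMul {A : Type*} (G : Type*) [Group G] (e : Equiv.Perm A) : (A → G) ≃* (A → G) :=
  { Equiv.arrowCongr e (Equiv.refl G) with
    map_mul' := fun _ _ => rfl }

/-- The permutation action of `Equiv.Perm A` on `A → G` as a homomorphism into `MulAut`. -/
def wreathphi (A : Type*) (G : Type*) [Group G] : Equiv.Perm A →* MulAut (A → G) where
  toFun := permCongrMul G
  map_one' := by ext f a; rfl
  map_mul' := fun e₁ e₂ => by ext f a; rfl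

/-- The wreath product `G ≀ Sym(A)`, realized as the semidirect product
`(A → G) ⋊ Equiv.Perm A` for the coordinate-permutation action; an element `w` acts
on `x : A → X` (for a `G`-set `X`) by `(w • x) a = w.left a • x (w.right⁻¹ a)`. -/
abbrev Wreath (G : Type*) [Group G] (A : Type*) :=
  SemidirectProduct (A → G) (Equiv.Perm A) (wreathphi A G)

/-- Let `L = ℤ^d`, `L₁ ≤ L` of finite index, `A = L/L₁`, and let
`α : L → G ≀ Sym(A)` be a homomorphism whose composite with the projection to `Sym(A)`
is the Cayley embedding of `A` composed with the quotient map.  Let `X` be a `G`-set and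
let `ρ_e : L → G` be `l ↦ (α l).left e` (the coordinate of the identity `e = 1 ∈ A`).
Then `ρ_e` restricted to `L₁` is a group homomorphism, and evaluation at `e` is a
bijection from the fixed points `(X^A)^{im α}` onto the fixed points `X^{im (ρ_e|_{L₁})}`. -/
theorem stmt4 (d : ℕ) (G X : Type*) [Group G] [MulAction G X]
    (L₁ : Subgroup (Multiplicative (Fin d → ℤ))) [L₁.Normal] [L₁.FiniteIndex]
    (α : Multiplicative (Fin d → ℤ) →* Wreath G (Multiplicative (Fin d → ℤ) ⧸ L₁))
    (hα : SemidirectProduct.rightHom.comp α =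
      (MulAction.toPermHom (Multiplicative (Fin d → ℤ) ⧸ L₁)
          (Multiplicative (Fin d → ℤ) ⧸ L₁)).comp (QuotientGroup.mk' L₁)) :
    -- `ρ_e` is a group homomorphism on `L₁`
    (∀ l l' : Multiplicative (Fin d → ℤ), l ∈ L₁ → l' ∈ L₁ →
      (α (l * l')).left 1 = (α l).left 1 * (α l').left 1)
    -- evaluation at `e = 1` maps `im α`-fixed points to `im (ρ_e|_{L₁})`-fixed points …
    ∧ (∀ x : (Multiplicative (Fin d → ℤ) ⧸ L₁) → X,
        (∀ l, (fun a => (α l).left a • x (((α l).right)⁻¹ a)) = x) →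
        ∀ l ∈ L₁, (α l).left 1 • x 1 = x 1)
    -- … and bijectively so
    ∧ (∀ y : X, (∀ l ∈ L₁, (α l).left 1 • y = y) →
        ∃! x : (Multiplicative (Fin d → ℤ) ⧸ L₁) → X,
          (∀ l, (fun a => (α l).left a • x (((α l).right)⁻¹ a)) = x) ∧ x 1 = y) := by
  have hright : ∀ (l : Multiplicative (Fin d → ℤ)) (a : Multiplicative (Fin d → ℤ) ⧸ L₁),
      (α l).right a = QuotientGroup.mk' L₁ l * a := by
    intro l a
    have h : (α l).right = MulAction.toPermHom _ _ (QuotientGroup.mk' L₁ l) :=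
      congrFun (congrArg DFunLike.coe hα) l
    rw [h]; rfl
  have hinv : ∀ (l : Multiplicative (Fin d → ℤ)) (a : Multiplicative (Fin d → ℤ) ⧸ L₁),
      ((α l).right)⁻¹ a = (QuotientGroup.mk' L₁ l)⁻¹ * a := by
    intro l a
    have h := hright l ((QuotientGroup.mk' L₁ l)⁻¹ * a)
    rw [mul_inv_cancel_left] at h
    conv_lhs => rw [← h]
    exact Equiv.symm_apply_apply _ _
  have hmul : ∀ (l l' : Multiplicative (Fin d → ℤ)) (a : Multiplicative (Fin d → ℤ) ⧸ L₁),
      (α (l * l')).left a = (α l).left a * (α l').left (((α l).right)⁻¹ a) := by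
    intro l l' a; rw [map_mul]; rfl
  have hone : ∀ l ∈ L₁, QuotientGroup.mk' L₁ l = 1 := fun l hl =>
    (QuotientGroup.eq_one_iff l).mpr hl
  refine ⟨?_, ?_, ?_⟩
  · intro l l' hl hl'
    rw [hmul l l' 1, hinv l 1, hone l hl]
    simp
  · intro x hx l hl
    have h := congrFun (hx l) 1
    simpa [hinv, hone l hl] using h
  · intro y hy
    have hkey : ∀ l l' : Multiplicative (Fin d → ℤ),
        QuotientGroup.mk' L₁ l = QuotientGroup.mk' L₁ l' →
        (α l).left (QuotientGroup.mk' L₁ l) • y = (α l').left (QuotientGroup.mk' L₁ l') • y := by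
      intro l l' h
      have hm : l⁻¹ * l' ∈ L₁ := by
        have h1 : QuotientGroup.mk' L₁ (l⁻¹ * l') = 1 := by
          rw [map_mul, map_inv, h, inv_mul_cancel]
        exact (QuotientGroup.eq_one_iff _).mp h1
      have hl' : l * (l⁻¹ * l') = l' := by group
      calc (α l).left (QuotientGroup.mk' L₁ l) • y
          = (α l).left (QuotientGroup.mk' L₁ l) • ((α (l⁻¹ * l')).left 1 • y) := by
            rw [hy _ hm]
        _ = ((α l).left (QuotientGroup.mk' L₁ l) *
              (α (l⁻¹ * l')).left (((α l).right)⁻¹ (QuotientGroup.mk' L₁ l))) • y := by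
            rw [mul_smul, hinv, inv_mul_cancel]
        _ = (α (l * (l⁻¹ * l'))).left (QuotientGroup.mk' L₁ l) • y := by rw [hmul l (l⁻¹ * l') (QuotientGroup.mk' L₁ l)]
        _ = (α l').left (QuotientGroup.mk' L₁ l') • y := by rw [hl', h]
    set q : Multiplicative (Fin d → ℤ) ⧸ L₁ → Multiplicative (Fin d → ℤ) := Quotient.out with hq
    have hout : ∀ a, QuotientGroup.mk' L₁ (q a) = a := fun a => Quotient.out_eq' a
    set x : (Multiplicative (Fin d → ℤ) ⧸ L₁) → X :=
      fun a => (α (q a)).left a • y with hxdef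
    have hx_eq : ∀ l : Multiplicative (Fin d → ℤ),
        x (QuotientGroup.mk' L₁ l) = (α l).left (QuotientGroup.mk' L₁ l) • y := by
      intro l
      have := hkey (q (QuotientGroup.mk' L₁ l)) l (by rw [hout])
      rw [hxdef]
      simpa [hout] using this
    have hxfix : ∀ l, (fun a => (α l).left a • x (((α l).right)⁻¹ a)) = x := by
      intro l
      funext a
      have ha : QuotientGroup.mk' L₁ (q a) = a := hout a
      have h1 : ((α l).right)⁻¹ a = QuotientGroup.mk' L₁ (l⁻¹ * q a) := by
        rw [hinv, map_mul, map_inv, ha]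
      have h2 : x a = (α (l * (l⁻¹ * q a))).left a • y := by
        have : l * (l⁻¹ * q a) = q a := by group
        rw [this]
      rw [h2, hmul l (l⁻¹ * q a) a, mul_smul, h1, hx_eq, ← h1]
    have hx1 : x 1 = y := by
      have : (1 : Multiplicative (Fin d → ℤ) ⧸ L₁) = QuotientGroup.mk' L₁ 1 := by
        rw [map_one]
      rw [this, hx_eq]
      simp
    refine ⟨x, ⟨hxfix, hx1⟩, ?_⟩
    rintro x' ⟨hx'fix, hx'1⟩
    funext a
    have ha : QuotientGroup.mk' L₁ (q a) = a := hout a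
    have h := congrFun (hx'fix (q a)) a
    rw [hinv, ha, inv_mul_cancel, hx'1] at h
    rw [← h, hxdef]
end

section
/- With P_n as above, for all class functions f on a finite group G and all j, k ≥ 1: the restriction of P_{j+k}(f) along the inclusion (G ≀ Σ_j) × (G ≀ Σ_k) ↪ G ≀ Σ_{j+k} equals the exterior product P_j(f) ⊠ P_k(f), i.e., P_{j+k}(f)(x, y) = P_j(f)(x) · P_k(f)(y) for x ∈ G ≀ Σ_j and y ∈ G ≀ Σ_k. -/
/-- The cycle product `g_{i} g_{σ(i)} ⋯ g_{σ^{m-1}(i)} ∈ G`, `m` the cycle length at `i`. -/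
noncomputable def cycleProd {G : Type*} [Group G] {n : ℕ} (g : Fin n → G)
    (σ : Equiv.Perm (Fin n)) (i : Fin n) : G :=
  ((List.range (Function.minimalPeriod (⇑σ) i)).map (fun j => g ((σ ^ j) i))).prod

/-- `R` contains exactly one representative of each cycle of `σ`. -/
def IsCycleTransversal {n : ℕ} (σ : Equiv.Perm (Fin n)) (R : Finset (Fin n)) : Prop :=
  ∀ j : Fin n, ∃! i, i ∈ R ∧ σ.SameCycle i j

/-- The total power operation `P_n(f)(g₁,…,gₙ,σ) = ∏_{cycles} f(cycle product)`,
computed with respect to a chosen set `R` of cycle representatives. -/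
noncomputable def powerOp {G : Type*} [Group G] {n : ℕ} (f : G → ℂ) (g : Fin n → G)
    (σ : Equiv.Perm (Fin n)) (R : Finset (Fin n)) : ℂ :=
  ∏ i ∈ R, f (cycleProd g σ i)

/-- The block inclusion `Σ_j × Σ_k ⊆ Σ_{j+k}` on permutations. -/
def blockPerm {j k : ℕ} (σ : Equiv.Perm (Fin j)) (τ : Equiv.Perm (Fin k)) :
    Equiv.Perm (Fin (j + k)) :=
  (Equiv.permCongr finSumFinEquiv) (Equiv.sumCongr σ τ)

open Function Equiv

section Aux

variable {G : Type*} [Group G]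

lemma perm_periodic {n : ℕ} (σ : Equiv.Perm (Fin n)) (i : Fin n) :
    i ∈ periodicPts ⇑σ :=
  mk_mem_periodicPts (orderOf_pos σ)
    (by simp [Function.IsPeriodicPt, Function.IsFixedPt, Equiv.Perm.iterate_eq_pow, pow_orderOf_eq_one])

lemma cycleProd_conj {n : ℕ} (g : Fin n → G) (σ : Equiv.Perm (Fin n)) (i : Fin n) :
    cycleProd g σ (σ i) = (g i)⁻¹ * cycleProd g σ i * g i := by
  have hp := perm_periodic σ i
  have hmin : Function.minimalPeriod ⇑σ (σ i) = Function.minimalPeriod ⇑σ i :=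
    Function.minimalPeriod_apply hp
  obtain ⟨p, hp'⟩ : ∃ p, Function.minimalPeriod ⇑σ i = p + 1 :=
    ⟨_, (Nat.succ_pred_eq_of_pos (Function.minimalPeriod_pos_of_mem_periodicPts hp)).symm⟩
  have hfix : (σ ^ (p + 1)) i = i := by
    have := Function.isPeriodicPt_minimalPeriod ⇑σ i
    rw [hp'] at this
    simp only [Function.IsPeriodicPt, Function.IsFixedPt, Equiv.Perm.iterate_eq_pow] at this
    exact this
  set A : G := ((List.range p).map (fun m => g ((σ ^ (m + 1)) i))).prod with hA
  have h1 : cycleProd g σ i = g i * A := by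
    unfold cycleProd
    rw [hp', List.range_succ_eq_map]
    simp [List.map_map, Function.comp_def, hA]
  have h2 : cycleProd g σ (σ i) = A * g i := by
    unfold cycleProd
    rw [hmin, hp', List.range_succ]
    have hentry : ∀ m : ℕ, (σ ^ m) (σ i) = (σ ^ (m + 1)) i := by
      intro m; rw [pow_succ, Equiv.Perm.mul_apply]
    simp only [List.map_append, List.prod_append, List.map_cons, List.map_nil,
      List.prod_cons, List.prod_nil, mul_one, hentry, hfix, hA]
  rw [h1, h2]
  group

lemma f_cycleProd_pow (f : G → ℂ) (hf : ∀ g h : G, f (h * g * h⁻¹) = f g)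
    {n : ℕ} (g : Fin n → G) (σ : Equiv.Perm (Fin n)) (i : Fin n) (m : ℕ) :
    f (cycleProd g σ ((σ ^ m) i)) = f (cycleProd g σ i) := by
  induction m with
  | zero => simp
  | succ m ih =>
    have hs : (σ ^ (m + 1)) i = σ ((σ ^ m) i) := by
      rw [pow_succ', Equiv.Perm.mul_apply]
    rw [hs, cycleProd_conj]
    set x := (σ ^ m) i
    have := hf (cycleProd g σ x) (g x)⁻¹
    rw [inv_inv] at this
    rw [this]; exact ih

lemma f_cycleProd_sameCycle (f : G → ℂ) (hf : ∀ g h : G, f (h * g * h⁻¹) = f g)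
    {n : ℕ} (g : Fin n → G) {σ : Equiv.Perm (Fin n)} {a b : Fin n}
    (h : σ.SameCycle a b) : f (cycleProd g σ b) = f (cycleProd g σ a) := by
  obtain ⟨m, -, rfl⟩ := h.exists_pow_eq'
  exact f_cycleProd_pow f hf g σ a m

/-- The power operation does not depend on the choice of cycle transversal. -/
lemma powerOp_transversal {n : ℕ} (f : G → ℂ) (hf : ∀ g h : G, f (h * g * h⁻¹) = f g)
    (g : Fin n → G) (σ : Equiv.Perm (Fin n)) {R R' : Finset (Fin n)}
    (hR : IsCycleTransversal σ R) (hR' : IsCycleTransversal σ R') :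
    powerOp f g σ R = powerOp f g σ R' := by
  unfold powerOp
  refine Finset.prod_bij' (fun a _ => (hR' a).choose) (fun a _ => (hR a).choose)
    (fun a _ => (hR' a).choose_spec.1.1) (fun a _ => (hR a).choose_spec.1.1)
    ?_ ?_ ?_
  · intro a ha
    exact ((hR (hR' a).choose).choose_spec.2 a ⟨ha, ((hR' a).choose_spec.1.2).symm⟩).symm
  · intro a ha
    exact ((hR' (hR a).choose).choose_spec.2 a ⟨ha, ((hR a).choose_spec.1.2).symm⟩).symm
  · intro a _
    exact f_cycleProd_sameCycle f hf g ((hR' a).choose_spec.1.2)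

end Aux

section Block

variable {j k : ℕ} (σ : Equiv.Perm (Fin j)) (τ : Equiv.Perm (Fin k))

lemma blockPerm_castAdd (i : Fin j) :
    blockPerm σ τ (Fin.castAdd k i) = Fin.castAdd k (σ i) := by
  simp [blockPerm, Equiv.permCongr_apply, finSumFinEquiv_symm_apply_castAdd,
    finSumFinEquiv_apply_left]

lemma blockPerm_natAdd (i : Fin k) :
    blockPerm σ τ (Fin.natAdd j i) = Fin.natAdd j (τ i) := by
  simp [blockPerm, Equiv.permCongr_apply, finSumFinEquiv_symm_apply_natAdd,
    finSumFinEquiv_apply_right]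

lemma blockPerm_pow_castAdd (m : ℕ) (i : Fin j) :
    ((blockPerm σ τ) ^ m) (Fin.castAdd k i) = Fin.castAdd k ((σ ^ m) i) := by
  induction m with
  | zero => simp
  | succ m ih =>
    rw [pow_succ', pow_succ', Equiv.Perm.mul_apply, Equiv.Perm.mul_apply, ih,
      blockPerm_castAdd]

lemma blockPerm_pow_natAdd (m : ℕ) (i : Fin k) :
    ((blockPerm σ τ) ^ m) (Fin.natAdd j i) = Fin.natAdd j ((τ ^ m) i) := by
  induction m with
  | zero => simp
  | succ m ih =>
    rw [pow_succ', pow_succ', Equiv.Perm.mul_apply, Equiv.Perm.mul_apply, ih,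
      blockPerm_natAdd]

lemma castAdd_ne_natAdd (a : Fin j) (b : Fin k) :
    Fin.castAdd k a ≠ Fin.natAdd j b := by
  intro h
  have := congrArg Fin.val h
  simp only [Fin.coe_castAdd, Fin.coe_natAdd] at this
  omega

lemma sameCycle_castAdd {a : Fin j} {x : Fin (j + k)}
    (h : (blockPerm σ τ).SameCycle (Fin.castAdd k a) x) :
    ∃ b : Fin j, x = Fin.castAdd k b ∧ σ.SameCycle a b := by
  obtain ⟨m, -, hm⟩ := h.exists_pow_eq'
  refine ⟨(σ ^ m) a, ?_, ⟨(m : ℤ), by rw [zpow_natCast]⟩⟩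
  rw [← hm, blockPerm_pow_castAdd]

lemma sameCycle_natAdd {a : Fin k} {x : Fin (j + k)}
    (h : (blockPerm σ τ).SameCycle (Fin.natAdd j a) x) :
    ∃ b : Fin k, x = Fin.natAdd j b ∧ τ.SameCycle a b := by
  obtain ⟨m, -, hm⟩ := h.exists_pow_eq'
  refine ⟨(τ ^ m) a, ?_, ⟨(m : ℤ), by rw [zpow_natCast]⟩⟩
  rw [← hm, blockPerm_pow_natAdd]

lemma sameCycle_castAdd_of {a b : Fin j} (h : σ.SameCycle a b) :
    (blockPerm σ τ).SameCycle (Fin.castAdd k a) (Fin.castAdd k b) := by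
  obtain ⟨m, -, rfl⟩ := h.exists_pow_eq'
  exact ⟨(m : ℤ), by rw [zpow_natCast, blockPerm_pow_castAdd]⟩

lemma sameCycle_natAdd_of {a b : Fin k} (h : τ.SameCycle a b) :
    (blockPerm σ τ).SameCycle (Fin.natAdd j a) (Fin.natAdd j b) := by
  obtain ⟨m, -, rfl⟩ := h.exists_pow_eq'
  exact ⟨(m : ℤ), by rw [zpow_natCast, blockPerm_pow_natAdd]⟩

lemma natAdd_inj {a b : Fin k} (h : Fin.natAdd j a = Fin.natAdd j b) : a = b := by
  have := congrArg Fin.val h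
  simp only [Fin.coe_natAdd] at this
  exact Fin.ext (by omega)

/-- The canonical transversal for the block permutation. -/
lemma block_transversal {R₁ : Finset (Fin j)} {R₂ : Finset (Fin k)}
    (hR₁ : IsCycleTransversal σ R₁) (hR₂ : IsCycleTransversal τ R₂) :
    IsCycleTransversal (blockPerm σ τ)
      (R₁.image (Fin.castAdd k) ∪ R₂.image (Fin.natAdd j)) := by
  intro x
  induction x using Fin.addCases with
  | left a =>
    obtain ⟨r, ⟨hrR, hrc⟩, hun⟩ := hR₁ a
    refine ⟨Fin.castAdd k r, ⟨Finset.mem_union_left _ (Finset.mem_image.2 ⟨r, hrR, rfl⟩),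
      sameCycle_castAdd_of σ τ hrc⟩, ?_⟩
    rintro y ⟨hy, hyc⟩
    rcases Finset.mem_union.1 hy with hy | hy
    · obtain ⟨r₁, hr₁, rfl⟩ := Finset.mem_image.1 hy
      obtain ⟨b, hb, hbc⟩ := sameCycle_castAdd σ τ hyc
      have hba : b = a := Fin.castAdd_injective _ _ hb.symm
      rw [hun r₁ ⟨hr₁, hba ▸ hbc⟩]
    · obtain ⟨r₂, hr₂, rfl⟩ := Finset.mem_image.1 hy
      obtain ⟨b, hb, -⟩ := sameCycle_natAdd σ τ hyc
      exact absurd hb (castAdd_ne_natAdd a b)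
  | right a =>
    obtain ⟨r, ⟨hrR, hrc⟩, hun⟩ := hR₂ a
    refine ⟨Fin.natAdd j r, ⟨Finset.mem_union_right _ (Finset.mem_image.2 ⟨r, hrR, rfl⟩),
      sameCycle_natAdd_of σ τ hrc⟩, ?_⟩
    rintro y ⟨hy, hyc⟩
    rcases Finset.mem_union.1 hy with hy | hy
    · obtain ⟨r₁, hr₁, rfl⟩ := Finset.mem_image.1 hy
      obtain ⟨b, hb, -⟩ := sameCycle_castAdd σ τ hyc
      exact absurd hb (Ne.symm (castAdd_ne_natAdd b a))
    · obtain ⟨r₂, hr₂, rfl⟩ := Finset.mem_image.1 hy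
      obtain ⟨b, hb, hbc⟩ := sameCycle_natAdd σ τ hyc
      have hba : b = a := natAdd_inj hb.symm
      rw [hun r₂ ⟨hr₂, hba ▸ hbc⟩]

lemma minimalPeriod_blockPerm_castAdd (i : Fin j) :
    Function.minimalPeriod ⇑(blockPerm σ τ) (Fin.castAdd k i)
      = Function.minimalPeriod ⇑σ i := by
  apply le_antisymm
  · refine Function.IsPeriodicPt.minimalPeriod_le
      (Function.minimalPeriod_pos_of_mem_periodicPts (perm_periodic σ i)) ?_
    have hfix : (σ ^ Function.minimalPeriod ⇑σ i) i = i := by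
      have h0 := Function.isPeriodicPt_minimalPeriod ⇑σ i
      simp only [Function.IsPeriodicPt, Function.IsFixedPt,
        Equiv.Perm.iterate_eq_pow] at h0
      exact h0
    show (⇑(blockPerm σ τ))^[Function.minimalPeriod ⇑σ i] (Fin.castAdd k i) = Fin.castAdd k i
    rw [Equiv.Perm.iterate_eq_pow, blockPerm_pow_castAdd, hfix]
  · refine Function.IsPeriodicPt.minimalPeriod_le
      (Function.minimalPeriod_pos_of_mem_periodicPts
        (perm_periodic (blockPerm σ τ) (Fin.castAdd k i))) ?_
    have hfix : Fin.castAdd k (((σ ^ Function.minimalPeriod ⇑(blockPerm σ τ)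
        (Fin.castAdd k i))) i) = Fin.castAdd k i := by
      rw [← blockPerm_pow_castAdd σ τ]
      have h0 := Function.isPeriodicPt_minimalPeriod ⇑(blockPerm σ τ) (Fin.castAdd k i)
      simp only [Function.IsPeriodicPt, Function.IsFixedPt,
        Equiv.Perm.iterate_eq_pow] at h0
      exact h0
    show (⇑σ)^[_] i = i
    rw [Equiv.Perm.iterate_eq_pow]
    exact Fin.castAdd_injective _ _ hfix

lemma minimalPeriod_blockPerm_natAdd (i : Fin k) :
    Function.minimalPeriod ⇑(blockPerm σ τ) (Fin.natAdd j i)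
      = Function.minimalPeriod ⇑τ i := by
  apply le_antisymm
  · refine Function.IsPeriodicPt.minimalPeriod_le
      (Function.minimalPeriod_pos_of_mem_periodicPts (perm_periodic τ i)) ?_
    have hfix : (τ ^ Function.minimalPeriod ⇑τ i) i = i := by
      have h0 := Function.isPeriodicPt_minimalPeriod ⇑τ i
      simp only [Function.IsPeriodicPt, Function.IsFixedPt,
        Equiv.Perm.iterate_eq_pow] at h0
      exact h0
    show (⇑(blockPerm σ τ))^[Function.minimalPeriod ⇑τ i] (Fin.natAdd j i) = Fin.natAdd j i
    rw [Equiv.Perm.iterate_eq_pow, blockPerm_pow_natAdd, hfix]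
  · refine Function.IsPeriodicPt.minimalPeriod_le
      (Function.minimalPeriod_pos_of_mem_periodicPts
        (perm_periodic (blockPerm σ τ) (Fin.natAdd j i))) ?_
    have hfix : Fin.natAdd j (((τ ^ Function.minimalPeriod ⇑(blockPerm σ τ)
        (Fin.natAdd j i))) i) = Fin.natAdd j i := by
      rw [← blockPerm_pow_natAdd σ τ]
      have h0 := Function.isPeriodicPt_minimalPeriod ⇑(blockPerm σ τ) (Fin.natAdd j i)
      simp only [Function.IsPeriodicPt, Function.IsFixedPt,
        Equiv.Perm.iterate_eq_pow] at h0
      exact h0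
    show (⇑τ)^[_] i = i
    rw [Equiv.Perm.iterate_eq_pow]
    exact natAdd_inj hfix

lemma cycleProd_append_castAdd {G : Type*} [Group G] (g₁ : Fin j → G) (g₂ : Fin k → G)
    (i : Fin j) :
    cycleProd (Fin.append g₁ g₂) (blockPerm σ τ) (Fin.castAdd k i) = cycleProd g₁ σ i := by
  unfold cycleProd
  rw [minimalPeriod_blockPerm_castAdd]
  simp only [blockPerm_pow_castAdd, Fin.append_left]

lemma cycleProd_append_natAdd {G : Type*} [Group G] (g₁ : Fin j → G) (g₂ : Fin k → G)
    (i : Fin k) :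
    cycleProd (Fin.append g₁ g₂) (blockPerm σ τ) (Fin.natAdd j i) = cycleProd g₂ τ i := by
  unfold cycleProd
  rw [minimalPeriod_blockPerm_natAdd]
  simp only [blockPerm_pow_natAdd, Fin.append_right]

end Block

/-- for a class function `f` on a finite group `G` and `j, k ≥ 1`, the
restriction of `P_{j+k}(f)` along `(G ≀ Σ_j) × (G ≀ Σ_k) ↪ G ≀ Σ_{j+k}` (block permutations
and concatenated tuples) equals the exterior product `P_j(f) ⊠ P_k(f)`. -/
theorem stmt16 {G : Type*} [Group G] [Finite G] (j k : ℕ) (hj : 1 ≤ j) (hk : 1 ≤ k)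
    (f : G → ℂ) (hf : ∀ g h : G, f (h * g * h⁻¹) = f g)
    (g₁ : Fin j → G) (g₂ : Fin k → G) (σ : Equiv.Perm (Fin j)) (τ : Equiv.Perm (Fin k))
    (R : Finset (Fin (j + k))) (R₁ : Finset (Fin j)) (R₂ : Finset (Fin k))
    (hR : IsCycleTransversal (blockPerm σ τ) R) (hR₁ : IsCycleTransversal σ R₁)
    (hR₂ : IsCycleTransversal τ R₂) :
    powerOp f (Fin.append g₁ g₂) (blockPerm σ τ) R
      = powerOp f g₁ σ R₁ * powerOp f g₂ τ R₂ := by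
  have hdisj : Disjoint (R₁.image (Fin.castAdd k)) (R₂.image (Fin.natAdd j)) := by
    rw [Finset.disjoint_left]
    rintro x hx hx'
    obtain ⟨a, -, rfl⟩ := Finset.mem_image.1 hx
    obtain ⟨b, -, hb⟩ := Finset.mem_image.1 hx'
    exact castAdd_ne_natAdd a b hb.symm
  rw [powerOp_transversal f hf _ _ hR (block_transversal σ τ hR₁ hR₂)]
  unfold powerOp
  rw [Finset.prod_union hdisj,
    Finset.prod_image (fun a _ b _ h => Fin.castAdd_injective _ _ h),
    Finset.prod_image (fun a _ b _ h => natAdd_inj h)]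
  simp only [cycleProd_append_castAdd, cycleProd_append_natAdd]
end
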